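/- Let H be a complex Hilbert space, n ∈ ℕ, and A₁,…,Aₙ, B₁,…,Bₙ ∈ B(H) such that each Aⱼ is normal, the Aⱼ mutually commute, each Bⱼ is normal, and the Bⱼ mutually commute. Then for every X ∈ B(H): ‖Σ_{j=1}^n Aⱼ* X Bⱼ‖ ≤ ‖(Σ_{j=1}^n Aⱼ* Aⱼ)^{1/2} · X · (Σ_{j=1}^n Bⱼ* Bⱼ)^{1/2}‖. -/

import Mathlib

set_option synthInstance.maxHeartbeats 200000
set_option maxHeartbeats 1000000
open ContinuousLinearMap

section Auxiliary

section Fuglede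
open NormedSpace

private lemma conj_eq_aux {R : Type*} [Ring R] (e1 e2 e2' T e3 : R)
    (h1 : T * e2 = e2 * T) (h2 : e2' * e2 = 1) :
    (e1 * e2') * T * (e2 * e3) = e1 * T * e3 := by
  calc (e1 * e2') * T * (e2 * e3) = e1 * (e2' * (T * e2) * e3) := by simp only [mul_assoc]
    _ = e1 * (e2' * (e2 * T) * e3) := by rw [h1]
    _ = e1 * ((e2' * e2) * (T * e3)) := by simp only [mul_assoc]
    _ = e1 * T * e3 := by rw [h2, one_mul, mul_assoc]

variable {H : Type*} [NormedAddCommGroup H] [InnerProductSpace ℂ H] [CompleteSpace H]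

private noncomputable def qAlg : NormedAlgebra ℚ (H →L[ℂ] H) := NormedAlgebra.restrictScalars ℚ ℂ _

attribute [local instance] qAlg

theorem norm_exp_skew_le (K : H →L[ℂ] H) (hKstar : star K = -K) : ‖exp K‖ ≤ 1 := by
  have hunit : star (exp K) * exp K = 1 := by
    rw [star_exp, hKstar, ← exp_add_of_commute (Commute.refl K).neg_left, neg_add_cancel, exp_zero]
  have h1 : ‖exp K‖ * ‖exp K‖ = ‖(1 : H →L[ℂ] H)‖ := by
    rw [← hunit, CStarRing.norm_star_mul_self]
  have h2 : ‖(1 : H →L[ℂ] H)‖ ≤ 1 := by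
    rw [ContinuousLinearMap.one_def]; exact ContinuousLinearMap.norm_id_le
  nlinarith [norm_nonneg (exp K)]

theorem my_fuglede (N T : H →L[ℂ] H) (hN : IsStarNormal N) (h : Commute T N) :
    Commute T (star N) := by
  set M := star N with hM
  have hNM : Commute N M := hN.star_comm_self.symm
  have hTexp : ∀ w : ℂ, Commute T (exp (w • N)) := fun w => (h.smul_right w).exp_right
  have hb : ∀ z : ℂ, ‖exp (z • M) * T * exp (z • (-M))‖ ≤ ‖T‖ := by
    intro z
    set c : ℂ := starRingEnd ℂ z with hc
    set K : H →L[ℂ] H := z • M - c • N with hK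
    have hKstar : star K = -K := by
      simp [hK, star_smul, hM, hc, sub_eq_add_neg, neg_add, add_comm]
    have hexpK : exp K = exp (z • M) * exp (-(c • N)) := by
      rw [hK, sub_eq_add_neg, exp_add_of_commute ((hNM.symm.smul_left _).smul_right _).neg_right]
    have hexpnegK : exp (-K) = exp (c • N) * exp (z • (-M)) := by
      have hKeq : -K = c • N + z • (-M) := by rw [hK]; module
      rw [hKeq, exp_add_of_commute]
      simpa [smul_neg] using ((hNM.smul_left c).smul_right z).neg_right
    have h1 : T * exp (c • N) = exp (c • N) * T := (hTexp c).eq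
    have h2 : exp (-(c • N)) * exp (c • N) = 1 := by
      rw [← exp_add_of_commute (Commute.refl _).neg_left, neg_add_cancel, exp_zero]
    have key : exp (z • M) * T * exp (z • (-M)) = exp K * T * exp (-K) := by
      rw [hexpK, hexpnegK, conj_eq_aux _ _ _ _ _ h1 h2]
    rw [key]
    calc ‖exp K * T * exp (-K)‖ ≤ ‖exp K * T‖ * ‖exp (-K)‖ := norm_mul_le _ _
      _ ≤ ‖exp K‖ * ‖T‖ * ‖exp (-K)‖ := by gcongr; exact norm_mul_le _ _
      _ ≤ 1 * ‖T‖ * 1 := by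
          gcongr
          · exact norm_exp_skew_le K hKstar
          · exact norm_exp_skew_le (-K) (by rw [star_neg, hKstar, neg_neg])
      _ = ‖T‖ := by ring
  have hdiff : Differentiable ℂ (fun z : ℂ => exp (z • M) * T * exp (z • (-M))) := by
    apply Differentiable.mul
    apply Differentiable.mul
    · exact fun z => (hasDerivAt_exp_smul_const M z).differentiableAt
    · exact differentiable_const T
    · exact fun z => (hasDerivAt_exp_smul_const (-M) z).differentiableAt
  have hbdd : Bornology.IsBounded
      (Set.range (fun z : ℂ => exp (z • M) * T * exp (z • (-M)))) := by
    apply Bornology.IsBounded.subset (Metric.isBounded_closedBall (x := (0 : H →L[ℂ] H)) (r := ‖T‖))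
    rintro - ⟨z, rfl⟩
    exact mem_closedBall_zero_iff.mpr (hb z)
  have hconst : ∀ z : ℂ, exp (z • M) * T * exp (z • (-M)) = T := by
    intro z
    have := hdiff.apply_eq_apply_of_bounded hbdd z 0
    simpa [exp_zero] using this
  have hcomm_exp : ∀ z : ℂ, exp (z • M) * T = T * exp (z • M) := by
    intro z
    have h2 : exp (z • (-M)) * exp (z • M) = 1 := by
      rw [smul_neg, ← exp_add_of_commute (Commute.refl (z • M)).neg_left, neg_add_cancel, exp_zero]
    calc exp (z • M) * T = exp (z • M) * T * (exp (z • (-M)) * exp (z • M)) := by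
          rw [h2, mul_one]
      _ = (exp (z • M) * T * exp (z • (-M))) * exp (z • M) := by
          simp only [mul_assoc]
      _ = T * exp (z • M) := by rw [hconst z]
  have hF : HasDerivAt (fun z : ℂ => exp (z • M) * T) (M * T) 0 := by
    have := (hasDerivAt_exp_smul_const (𝕂 := ℂ) M 0).mul_const T
    simpa using this
  have hG : HasDerivAt (fun z : ℂ => exp (z • M) * T) (T * M) 0 := by
    have h' : (fun z : ℂ => exp (z • M) * T) = fun z : ℂ => T * exp (z • M) :=
      funext hcomm_exp
    rw [h']
    have := (hasDerivAt_exp_smul_const (𝕂 := ℂ) M 0).const_mul T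
    simpa using this
  exact Commute.symm (hF.unique hG)

end Fuglede


variable {H : Type*} [NormedAddCommGroup H] [InnerProductSpace ℂ H] [CompleteSpace H]

theorem my_commute_cfc {W a : H →L[ℂ] H} (ha : IsSelfAdjoint a) (h : Commute W a) (f : ℝ → ℝ) :
    Commute W (cfc f a) := by
  by_cases hf : ContinuousOn f (spectrum ℝ a)
  · rw [cfc_apply f a ha hf]
    have hmain : ∀ g : C(spectrum ℝ a, ℝ), Commute W (cfcHom ha g) := by
      intro g
      induction g using ContinuousMap.induction_on_of_compact with
      | const r =>
          have : (ContinuousMap.const (spectrum ℝ a) r) = algebraMap ℝ C(spectrum ℝ a, ℝ) r := rfl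
          rw [this, AlgHomClass.commutes]
          exact (Algebra.commutes r W).symm
      | id => rw [cfcHom_id ha]; exact h
      | star_id =>
          rw [star_trivial, cfcHom_id ha]; exact h
      | add f g hf hg => rw [map_add]; exact hf.add_right hg
      | mul f g hf hg => rw [map_mul]; exact hf.mul_right hg
      | frequently f hfreq =>
          have hcl : IsClosed {g : C(spectrum ℝ a, ℝ) | Commute W (cfcHom ha g)} := by
            have hcont : Continuous (cfcHom ha (R := ℝ)) :=
              (cfcHom_isClosedEmbedding ha).continuous
            exact isClosed_eq (continuous_const.mul hcont) (hcont.mul continuous_const)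
          have : f ∈ closure {g : C(spectrum ℝ a, ℝ) | Commute W (cfcHom ha g)} :=
            mem_closure_iff_frequently.mpr hfreq
          rwa [hcl.closure_eq] at this
    exact hmain _
  · rw [cfc_apply_of_not_continuousOn a hf]
    exact Commute.zero_right W

lemma sqrt_diff_le {x ε : ℝ} (hx : 0 ≤ x) (hε : 0 ≤ ε) :
    |Real.sqrt (x + ε) - Real.sqrt x| ≤ Real.sqrt ε := by
  rw [abs_le]
  constructor
  · have h1 : Real.sqrt x ≤ Real.sqrt (x + ε) := Real.sqrt_le_sqrt (by linarith)
    have := Real.sqrt_nonneg ε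
    linarith
  · have h2 : Real.sqrt (x + ε) ≤ Real.sqrt x + Real.sqrt ε := by
      rw [show Real.sqrt x + Real.sqrt ε = Real.sqrt ((Real.sqrt x + Real.sqrt ε) ^ 2) from
        (Real.sqrt_sq (by positivity)).symm]
      apply Real.sqrt_le_sqrt
      nlinarith [Real.sq_sqrt hx, Real.sq_sqrt hε, Real.sqrt_nonneg x, Real.sqrt_nonneg ε]
    linarith

open ContinuousLinearMap in
/-- The ε-regularized square root machine for one commuting normal family. -/
theorem family_machine {H : Type*} [NormedAddCommGroup H] [InnerProductSpace ℂ H]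
    [CompleteSpace H] (n : ℕ) (C : Fin n → H →L[ℂ] H)
    (hnorm : ∀ j, IsStarNormal (C j)) (hcomm : ∀ i j, Commute (C i) (C j))
    {ε : ℝ} (hε : 0 < ε) :
    ∃ S R : H →L[ℂ] H, IsSelfAdjoint S ∧ S * R = 1 ∧
      ‖S - CFC.sqrt (∑ j, star (C j) * C j)‖ ≤ Real.sqrt ε ∧
      ∀ x : H, ∑ j, ‖R (C j x)‖ ^ 2 ≤ ‖x‖ ^ 2 := by
  set P : H →L[ℂ] H := ∑ j, star (C j) * C j with hPdef
  have hP0 : (0 : H →L[ℂ] H) ≤ P :=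
    Finset.sum_nonneg fun j _ => star_mul_self_nonneg (C j)
  have hPsa : IsSelfAdjoint P := IsSelfAdjoint.of_nonneg hP0
  have hspec : ∀ x ∈ spectrum ℝ P, 0 ≤ x := fun x hx => spectrum_nonneg_of_nonneg hP0 hx
  have hCP : ∀ j, Commute (C j) P := by
    intro j
    apply Commute.sum_right
    intro i _
    exact (my_fuglede (C i) (C j) (hnorm i) (hcomm j i)).mul_right (hcomm j i)
  -- continuous functions
  have hcont1 : Continuous (fun x : ℝ => Real.sqrt (x + ε)) :=
    Real.continuous_sqrt.comp (continuous_add_right ε)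
  have hcont2 : ContinuousOn (fun x : ℝ => (Real.sqrt (x + ε))⁻¹) (spectrum ℝ P) := by
    apply ContinuousOn.inv₀ hcont1.continuousOn
    intro x hx
    have := hspec x hx
    positivity
  set S : H →L[ℂ] H := cfc (fun x : ℝ => Real.sqrt (x + ε)) P with hSdef
  set R : H →L[ℂ] H := cfc (fun x : ℝ => (Real.sqrt (x + ε))⁻¹) P with hRdef
  have hSsa : IsSelfAdjoint S := cfc_predicate _ _
  have hRsa : IsSelfAdjoint R := cfc_predicate _ _
  have hSR : S * R = 1 := by
    rw [hSdef, hRdef, ← cfc_mul _ _ P hcont1.continuousOn hcont2]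
    rw [show (1 : H →L[ℂ] H) = cfc (fun _ : ℝ => (1 : ℝ)) P from (cfc_const_one ℝ P).symm]
    apply cfc_congr
    intro x hx
    have h1 : (0:ℝ) < x + ε := by have := hspec x hx; linarith
    field_simp
  have hnear : ‖S - CFC.sqrt P‖ ≤ Real.sqrt ε := by
    have hsqrtP : CFC.sqrt P = cfc Real.sqrt P := by
      apply CFC.sqrt_unique
      · rw [← cfc_mul _ _ P Real.continuous_sqrt.continuousOn Real.continuous_sqrt.continuousOn]
        have hcg : cfc (fun x => Real.sqrt x * Real.sqrt x) P = cfc (fun x : ℝ => x) P :=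
          cfc_congr fun x hx => Real.mul_self_sqrt (hspec x hx)
        rw [hcg, cfc_id' ℝ P hPsa]
      · exact cfc_nonneg fun x _ => Real.sqrt_nonneg x
    rw [hsqrtP, hSdef, ← cfc_sub _ _ P hcont1.continuousOn Real.continuous_sqrt.continuousOn]
    apply norm_cfc_le (Real.sqrt_nonneg ε)
    intro x hx
    rw [Real.norm_eq_abs]
    exact sqrt_diff_le (hspec x hx) hε.le
  refine ⟨S, R, hSsa, hSR, hnear, ?_⟩
  -- the summed bound
  intro x
  have hCR : ∀ j, Commute (C j) R := fun j => my_commute_cfc hPsa (hCP j) _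
  have hQ : ∑ j, star (C j) * (star R * R) * C j = P * (R * R) := by
    have : ∀ j, star (C j) * (star R * R) * C j = (star (C j) * C j) * (R * R) := by
      intro j
      rw [hRsa.star_eq]
      have h1 : R * R * C j = C j * (R * R) := ((hCR j).symm.mul_left (hCR j).symm).eq
      calc star (C j) * (R * R) * C j = star (C j) * (R * R * C j) := by rw [mul_assoc]
        _ = star (C j) * (C j * (R * R)) := by rw [h1]
        _ = star (C j) * C j * (R * R) := by rw [mul_assoc]
    rw [Finset.sum_congr rfl fun j _ => this j, ← Finset.sum_mul]
  have hPRR : cfc (fun x : ℝ => x * ((Real.sqrt (x + ε))⁻¹ * (Real.sqrt (x + ε))⁻¹)) P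
      = P * (R * R) := by
    rw [cfc_mul (fun x : ℝ => x) (fun x : ℝ => (Real.sqrt (x + ε))⁻¹ * (Real.sqrt (x + ε))⁻¹) P
      (continuous_id.continuousOn) (hcont2.mul hcont2), cfc_id' ℝ P hPsa,
      cfc_mul _ _ P hcont2 hcont2]
  have hQnorm : ‖P * (R * R)‖ ≤ 1 := by
    rw [← hPRR]
    apply norm_cfc_le one_pos.le
    intro x hx
    have h0 := hspec x hx
    have h1 : (0:ℝ) < x + ε := by linarith
    have h2 : (Real.sqrt (x + ε))⁻¹ * (Real.sqrt (x + ε))⁻¹ = (x + ε)⁻¹ := by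
      rw [← mul_inv, Real.mul_self_sqrt h1.le]
    rw [Real.norm_eq_abs, h2, abs_of_nonneg (by positivity), ← div_eq_mul_inv,
      div_le_one h1]
    linarith
  -- pointwise computation
  have hpt : ∀ (D : H →L[ℂ] H) (v : H), ‖D v‖ ^ 2 = RCLike.re (inner ℂ ((star D * D) v) v : ℂ) := by
    intro D v
    rw [ContinuousLinearMap.star_eq_adjoint]
    have hco : ((ContinuousLinearMap.adjoint D * D) v) = ContinuousLinearMap.adjoint D (D v) := rfl
    rw [hco, ContinuousLinearMap.adjoint_inner_left]
    exact (inner_self_eq_norm_sq _).symm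
  calc ∑ j, ‖R (C j x)‖ ^ 2 = ∑ j, RCLike.re (inner ℂ ((star (R * C j) * (R * C j)) x) x : ℂ) := by
        refine Finset.sum_congr rfl fun j _ => ?_
        exact hpt (R * C j) x
    _ = RCLike.re (inner ℂ ((∑ j, star (R * C j) * (R * C j)) x) x : ℂ) := by
        rw [ContinuousLinearMap.sum_apply, sum_inner, map_sum]
    _ = RCLike.re (inner ℂ ((P * (R * R)) x) x : ℂ) := by
        have hop : (∑ j, star (R * C j) * (R * C j))
            = ∑ j, star (C j) * (star R * R) * C j :=
          Finset.sum_congr rfl fun j _ => by rw [star_mul]; simp only [mul_assoc]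
        rw [hop, hQ]
    _ ≤ ‖(inner ℂ ((P * (R * R)) x) x : ℂ)‖ := RCLike.re_le_norm _
    _ ≤ ‖(P * (R * R)) x‖ * ‖x‖ := norm_inner_le_norm _ _
    _ ≤ ‖P * (R * R)‖ * ‖x‖ * ‖x‖ := by
        gcongr
        exact ContinuousLinearMap.le_opNorm _ _
    _ ≤ 1 * ‖x‖ * ‖x‖ := by gcongr
    _ = ‖x‖ ^ 2 := by ring


end Auxiliary

/-- For commuting families of normal operators, the Cauchy–Schwarz inequality for
elementary operators takes the symmetric form
`‖Σ Aⱼ* X Bⱼ‖ ≤ ‖(Σ Aⱼ* Aⱼ)^{1/2} X (Σ Bⱼ* Bⱼ)^{1/2}‖`. -/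
lemma my_cs {n : ℕ} (f g : Fin n → ℝ) (hf : ∀ j, 0 ≤ f j) (hg : ∀ j, 0 ≤ g j)
    {a b : ℝ} (ha : 0 ≤ a) (hb : 0 ≤ b)
    (hfa : ∑ j, f j ^ 2 ≤ a ^ 2) (hgb : ∑ j, g j ^ 2 ≤ b ^ 2) :
    ∑ j, f j * g j ≤ a * b := by
  have h1 : (∑ j, f j * g j) ^ 2 ≤ (∑ j, f j ^ 2) * (∑ j, g j ^ 2) :=
    Finset.sum_mul_sq_le_sq_mul_sq _ _ _
  have h2 : (0:ℝ) ≤ ∑ j, f j * g j :=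
    Finset.sum_nonneg fun j _ => mul_nonneg (hf j) (hg j)
  have h3 : (0:ℝ) ≤ ∑ j, g j ^ 2 := Finset.sum_nonneg fun j _ => sq_nonneg _
  have h4 : (0:ℝ) ≤ ∑ j, f j ^ 2 := Finset.sum_nonneg fun j _ => sq_nonneg _
  nlinarith [mul_nonneg ha hb, sq_nonneg (∑ j, f j * g j - a * b),
    sq_nonneg (∑ j, f j * g j + a * b)]

theorem norm_sum_adjoint_mul_le_of_normal
    {H : Type*} [NormedAddCommGroup H] [InnerProductSpace ℂ H] [CompleteSpace H]
    (n : ℕ) (A B : Fin n → H →L[ℂ] H)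
    (hA : ∀ j, IsStarNormal (A j)) (hA' : ∀ i j, Commute (A i) (A j))
    (hB : ∀ j, IsStarNormal (B j)) (hB' : ∀ i j, Commute (B i) (B j))
    (X : H →L[ℂ] H) :
    ‖∑ j, adjoint (A j) * X * B j‖ ≤
      ‖CFC.sqrt (∑ j, adjoint (A j) * A j) * X * CFC.sqrt (∑ j, adjoint (B j) * B j)‖ := by
  simp only [← ContinuousLinearMap.star_eq_adjoint]
  set SA : H →L[ℂ] H := CFC.sqrt (∑ j, star (A j) * A j) with hSA
  set SB : H →L[ℂ] H := CFC.sqrt (∑ j, star (B j) * B j) with hSB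
  set L : H →L[ℂ] H := ∑ j, star (A j) * X * B j with hL
  set Cb : ℝ := ‖X‖ * (‖SB‖ + 1) + ‖SA‖ * ‖X‖ with hCb
  have hCb0 : 0 ≤ Cb := by positivity
  have key : ∀ ε : ℝ, 0 < ε → ε ≤ 1 → ‖L‖ ≤ ‖SA * X * SB‖ + Real.sqrt ε * Cb := by
    intro ε hε hε1
    obtain ⟨SεA, RA, hSAsa, hSRA, hSAnear, hboundA⟩ := family_machine n A hA hA' hε
    obtain ⟨SεB, RB, hSBsa, hSRB, hSBnear, hboundB⟩ := family_machine n B hB hB' hε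
    set Mop : H →L[ℂ] H := SεA * X * SεB with hMop
    have happlyA : ∀ v : H, SεA (RA v) = v := by
      intro v
      have := congrFun (congrArg DFunLike.coe hSRA) v
      simpa using this
    have happlyB : ∀ v : H, SεB (RB v) = v := by
      intro v
      have := congrFun (congrArg DFunLike.coe hSRB) v
      simpa using this
    have hinner : ∀ x y : H, ‖(inner ℂ (L x) y : ℂ)‖ ≤ ‖Mop‖ * ‖x‖ * ‖y‖ := by
      intro x y
      have expand : (inner ℂ (L x) y : ℂ) = ∑ j, (inner ℂ (Mop (RB (B j x))) (RA (A j y)) : ℂ) := by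
        rw [hL, ContinuousLinearMap.sum_apply, sum_inner]
        refine Finset.sum_congr rfl fun j _ => ?_
        have e1 : (inner ℂ ((star (A j) * X * B j) x) y : ℂ) = inner ℂ (X (B j x)) (A j y) := by
          rw [ContinuousLinearMap.star_eq_adjoint]
          have : (adjoint (A j) * X * B j) x = adjoint (A j) (X (B j x)) := rfl
          rw [this, ContinuousLinearMap.adjoint_inner_left]
        have e2 : (inner ℂ (Mop (RB (B j x))) (RA (A j y)) : ℂ) = inner ℂ (X (B j x)) (A j y) := by
          have hm : Mop (RB (B j x)) = SεA (X (B j x)) := by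
            rw [hMop]
            show SεA (X (SεB (RB (B j x)))) = SεA (X (B j x))
            rw [happlyB]
          rw [hm]
          have hadj : adjoint SεA = SεA := by
            rw [← ContinuousLinearMap.star_eq_adjoint, hSAsa.star_eq]
          calc (inner ℂ (SεA (X (B j x))) (RA (A j y)) : ℂ)
              = inner ℂ (X (B j x)) (SεA (RA (A j y))) := by
                conv_lhs => rw [← hadj]
                exact ContinuousLinearMap.adjoint_inner_left _ _ _
            _ = inner ℂ (X (B j x)) (A j y) := by rw [happlyA]
        rw [e1, ← e2]
      rw [expand]
      calc ‖∑ j, (inner ℂ (Mop (RB (B j x))) (RA (A j y)) : ℂ)‖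
          ≤ ∑ j, ‖(inner ℂ (Mop (RB (B j x))) (RA (A j y)) : ℂ)‖ := norm_sum_le _ _
        _ ≤ ∑ j, ‖Mop‖ * (‖RB (B j x)‖ * ‖RA (A j y)‖) := by
            refine Finset.sum_le_sum fun j _ => ?_
            calc ‖(inner ℂ (Mop (RB (B j x))) (RA (A j y)) : ℂ)‖
                ≤ ‖Mop (RB (B j x))‖ * ‖RA (A j y)‖ := norm_inner_le_norm _ _
              _ ≤ (‖Mop‖ * ‖RB (B j x)‖) * ‖RA (A j y)‖ := by
                  gcongr; exact ContinuousLinearMap.le_opNorm _ _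
              _ = ‖Mop‖ * (‖RB (B j x)‖ * ‖RA (A j y)‖) := by ring
        _ = ‖Mop‖ * ∑ j, ‖RB (B j x)‖ * ‖RA (A j y)‖ := by rw [Finset.mul_sum]
        _ ≤ ‖Mop‖ * (‖x‖ * ‖y‖) := by
            gcongr
            exact my_cs _ _ (fun j => norm_nonneg _) (fun j => norm_nonneg _)
              (norm_nonneg x) (norm_nonneg y) (hboundB x) (hboundA y)
        _ = ‖Mop‖ * ‖x‖ * ‖y‖ := by ring
    have hLle : ‖L‖ ≤ ‖Mop‖ := by
      apply ContinuousLinearMap.opNorm_le_bound _ (norm_nonneg Mop)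
      intro x
      by_cases hLx : L x = 0
      · rw [hLx]
        simp only [norm_zero]
        positivity
      · have h1 : ‖L x‖ ^ 2 ≤ ‖Mop‖ * ‖x‖ * ‖L x‖ := by
          calc ‖L x‖ ^ 2 = RCLike.re (inner ℂ (L x) (L x) : ℂ) := (inner_self_eq_norm_sq _).symm
            _ ≤ ‖(inner ℂ (L x) (L x) : ℂ)‖ := RCLike.re_le_norm _
            _ ≤ ‖Mop‖ * ‖x‖ * ‖L x‖ := hinner x (L x)
        have h2 : 0 < ‖L x‖ := norm_pos_iff.mpr hLx
        have h3 : ‖L x‖ * ‖L x‖ ≤ (‖Mop‖ * ‖x‖) * ‖L x‖ := by nlinarith [h1]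
        exact le_of_mul_le_mul_right h3 h2
    -- compare Mop with SA * X * SB
    have hsqε1 : Real.sqrt ε ≤ 1 := by
      rw [show (1:ℝ) = Real.sqrt 1 from (Real.sqrt_one).symm]
      exact Real.sqrt_le_sqrt hε1
    have hSεBnorm : ‖SεB‖ ≤ ‖SB‖ + Real.sqrt ε := by
      calc ‖SεB‖ = ‖SB + (SεB - SB)‖ := by congr 1; abel
        _ ≤ ‖SB‖ + ‖SεB - SB‖ := norm_add_le _ _
        _ ≤ ‖SB‖ + Real.sqrt ε := by gcongr
    have hdiff : Mop - SA * X * SB = (SεA - SA) * X * SεB + SA * X * (SεB - SB) := by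
      rw [hMop]; noncomm_ring
    have hdn : ‖Mop - SA * X * SB‖ ≤ Real.sqrt ε * Cb := by
      rw [hdiff]
      calc ‖(SεA - SA) * X * SεB + SA * X * (SεB - SB)‖
          ≤ ‖(SεA - SA) * X * SεB‖ + ‖SA * X * (SεB - SB)‖ := norm_add_le _ _
        _ ≤ ‖SεA - SA‖ * ‖X‖ * ‖SεB‖ + ‖SA‖ * ‖X‖ * ‖SεB - SB‖ := by
            gcongr
            · calc ‖(SεA - SA) * X * SεB‖ ≤ ‖(SεA - SA) * X‖ * ‖SεB‖ := norm_mul_le _ _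
                _ ≤ ‖SεA - SA‖ * ‖X‖ * ‖SεB‖ := by gcongr; exact norm_mul_le _ _
            · calc ‖SA * X * (SεB - SB)‖ ≤ ‖SA * X‖ * ‖SεB - SB‖ := norm_mul_le _ _
                _ ≤ ‖SA‖ * ‖X‖ * ‖SεB - SB‖ := by gcongr; exact norm_mul_le _ _
        _ ≤ Real.sqrt ε * ‖X‖ * (‖SB‖ + Real.sqrt ε) + ‖SA‖ * ‖X‖ * Real.sqrt ε := by
            gcongr
            all_goals first | exact hSAnear | exact hSεBnorm | exact hSBnear
        _ ≤ Real.sqrt ε * Cb := by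
            rw [hCb]
            have h0 : 0 ≤ Real.sqrt ε := Real.sqrt_nonneg ε
            have hkey : 0 ≤ (Real.sqrt ε * ‖X‖) * (1 - Real.sqrt ε) :=
              mul_nonneg (mul_nonneg h0 (norm_nonneg X)) (by linarith)
            nlinarith [hkey]
    calc ‖L‖ ≤ ‖Mop‖ := hLle
      _ = ‖SA * X * SB + (Mop - SA * X * SB)‖ := by congr 1; abel
      _ ≤ ‖SA * X * SB‖ + ‖Mop - SA * X * SB‖ := norm_add_le _ _
      _ ≤ ‖SA * X * SB‖ + Real.sqrt ε * Cb := by gcongr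
  apply le_of_forall_pos_le_add
  intro δ hδ
  set ε : ℝ := min 1 ((δ / (Cb + 1)) ^ 2) with hεdef
  have hεpos : 0 < ε := lt_min one_pos (by positivity)
  have hsqrt : Real.sqrt ε ≤ δ / (Cb + 1) := by
    calc Real.sqrt ε ≤ Real.sqrt ((δ / (Cb + 1)) ^ 2) :=
          Real.sqrt_le_sqrt (min_le_right _ _)
      _ = δ / (Cb + 1) := Real.sqrt_sq (by positivity)
  calc ‖L‖ ≤ ‖SA * X * SB‖ + Real.sqrt ε * Cb := key ε hεpos (min_le_left _ _)
    _ ≤ ‖SA * X * SB‖ + δ := by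
        have h1 : Real.sqrt ε * Cb ≤ (δ / (Cb + 1)) * Cb :=
          mul_le_mul_of_nonneg_right hsqrt hCb0
        have h2 : (δ / (Cb + 1)) * Cb ≤ δ := by
          rw [div_mul_eq_mul_div, div_le_iff₀ (by positivity)]
          nlinarith
        exact add_le_add_right (h1.trans h2) _
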